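/- For G finite, a G-graded ring R is graded nil clean if and only if J^g(R) is graded-nil and R/J^g(R) is graded nil clean. -/

import Mathlib

/-- A `G`-grading of a ring `R`: a family of additive subgroups `C g` with
`C g * C h ⊆ C (g*h)`, `1 ∈ C e`, and `R = ⊕_g C g` (internal direct sum). -/
structure Grading (G : Type*) [Group G] [DecidableEq G] (R : Type*) [Ring R] where
  C : G → AddSubgroup R
  one_mem : (1 : R) ∈ C 1
  mul_mem : ∀ {g h : G} {a b : R}, a ∈ C g → b ∈ C h → a * b ∈ C (g * h)
  isInternal : DirectSum.IsInternal C

namespace Grading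

variable {G : Type*} [Group G] [DecidableEq G] {R : Type*} [Ring R]

/-- An element is homogeneous if it lies in some component. -/
def Homogeneous (A : Grading G R) (a : R) : Prop := ∃ g, a ∈ A.C g

/-- A homogeneous element is graded nil clean if it is the sum of a homogeneous
idempotent and a homogeneous nilpotent. -/
def IsGradedNilClean (A : Grading G R) (a : R) : Prop :=
  ∃ f b : R, A.Homogeneous f ∧ IsIdempotentElem f ∧ A.Homogeneous b ∧
    IsNilpotent b ∧ a = f + b

/-- A graded ring is graded nil clean if every homogeneous element is. -/
def GradedNilClean (A : Grading G R) : Prop :=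
  ∀ a : R, A.Homogeneous a → A.IsGradedNilClean a

/-- Graded strongly nil clean element: the idempotent and nilpotent commute. -/
def IsGradedStronglyNilClean (A : Grading G R) (a : R) : Prop :=
  ∃ f b : R, A.Homogeneous f ∧ IsIdempotentElem f ∧ A.Homogeneous b ∧
    IsNilpotent b ∧ f * b = b * f ∧ a = f + b

def GradedStronglyNilClean (A : Grading G R) : Prop :=
  ∀ a : R, A.Homogeneous a → A.IsGradedStronglyNilClean a

end Grading

namespace Grading

variable {G : Type*} [Group G] [DecidableEq G] {R : Type*} [Ring R]

/-- A two-sided ideal, viewed as an additive subgroup. -/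
def tiAddSubgroup (I : TwoSidedIdeal R) : AddSubgroup R where
  carrier := I
  add_mem' := fun h1 h2 => I.add_mem h1 h2
  zero_mem' := I.zero_mem
  neg_mem' := fun h => I.neg_mem h

/-- A two-sided ideal is homogeneous if each of its elements lies in the sum of
the intersections `I ∩ R_g`, i.e. `I = ⊕_g (I ∩ R_g)`. -/
def HomogeneousTI (A : Grading G R) (I : TwoSidedIdeal R) : Prop :=
  ∀ a ∈ I, a ∈ ⨆ g : G, (A.C g ⊓ tiAddSubgroup I)

/-- The `g`-component of the quotient grading on `R/I`: the image of `R_g`. -/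
def quotC (A : Grading G R) (I : TwoSidedIdeal R) (g : G) :
    AddSubgroup I.ringCon.Quotient :=
  (A.C g).map (I.ringCon.mk' : R →+* I.ringCon.Quotient).toAddMonoidHom

/-- Homogeneous elements of the quotient graded ring `R/I`. -/
def QuotHomogeneous (A : Grading G R) (I : TwoSidedIdeal R)
    (a : I.ringCon.Quotient) : Prop :=
  ∃ g, a ∈ A.quotC I g

/-- The quotient graded ring `R/I` is graded nil clean. -/
def QuotGradedNilClean (A : Grading G R) (I : TwoSidedIdeal R) : Prop :=
  ∀ a : I.ringCon.Quotient, A.QuotHomogeneous I a →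
    ∃ f b : I.ringCon.Quotient, A.QuotHomogeneous I f ∧ IsIdempotentElem f ∧
      A.QuotHomogeneous I b ∧ IsNilpotent b ∧ a = f + b

/-- A quotient element is graded strongly nil clean. -/
def QuotIsGradedStronglyNilClean (A : Grading G R) (I : TwoSidedIdeal R)
    (a : I.ringCon.Quotient) : Prop :=
  ∃ f b : I.ringCon.Quotient, A.QuotHomogeneous I f ∧ IsIdempotentElem f ∧
    A.QuotHomogeneous I b ∧ IsNilpotent b ∧ f * b = b * f ∧ a = f + b

/-- The quotient graded ring `R/I` is graded strongly nil clean. -/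
def QuotGradedStronglyNilClean (A : Grading G R) (I : TwoSidedIdeal R) : Prop :=
  ∀ a : I.ringCon.Quotient, A.QuotHomogeneous I a →
    A.QuotIsGradedStronglyNilClean I a

/-- The ideal `I` is nilpotent: some power `I^n` vanishes, i.e. every product of
`n` elements of `I` is zero. -/
def NilpotentTI (I : TwoSidedIdeal R) : Prop :=
  ∃ n : ℕ, 0 < n ∧ ∀ x : Fin n → R, (∀ i, x i ∈ I) → (List.ofFn x).prod = 0

end Grading

/-- A homogeneous right ideal of a graded ring. -/
structure HomRightIdeal {G : Type*} [Group G] [DecidableEq G] {R : Type*} [Ring R]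
    (A : Grading G R) where
  carrier : AddSubgroup R
  mul_mem_right : ∀ a ∈ carrier, ∀ r : R, a * r ∈ carrier
  homogeneous : ∀ a ∈ carrier, a ∈ ⨆ g : G, (A.C g ⊓ carrier)

namespace HomRightIdeal

variable {G : Type*} [Group G] [DecidableEq G] {R : Type*} [Ring R] {A : Grading G R}

/-- A maximal (proper) homogeneous right ideal. -/
def IsMaximal (I : HomRightIdeal A) : Prop :=
  I.carrier ≠ ⊤ ∧ ∀ J : HomRightIdeal A, J.carrier ≠ ⊤ → I.carrier ≤ J.carrier →
    J.carrier = I.carrier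

end HomRightIdeal

/-- The graded Jacobson radical: the intersection of all maximal homogeneous
right ideals. -/
def Grading.gradedJacobson {G : Type*} [Group G] [DecidableEq G] {R : Type*} [Ring R]
    (A : Grading G R) : Set R :=
  { a | ∀ I : HomRightIdeal A, I.IsMaximal → a ∈ I.carrier }

namespace Grading
variable {G : Type*} [Group G] [DecidableEq G] {R : Type*} [Ring R] (A : Grading G R)

noncomputable def gequiv : DirectSum G (fun g => A.C g) ≃+ R :=
  AddEquiv.ofBijective (DirectSum.coeAddMonoidHom A.C) A.isInternal

@[simp] lemma gequiv_of (g : G) (a : A.C g) : A.gequiv (DirectSum.of _ g a) = a := by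
  exact DirectSum.coeAddMonoidHom_of A.C g a

/-- projection onto the degree-`g` component, as a map `R →+ R`. -/
noncomputable def proj (g : G) : R →+ R :=
  (A.C g).subtype.comp ((DFinsupp.evalAddMonoidHom g).comp A.gequiv.symm.toAddMonoidHom)

lemma proj_apply (g : G) (a : R) : A.proj g a = (A.gequiv.symm a g : R) := rfl

lemma proj_mem (g : G) (a : R) : A.proj g a ∈ A.C g := (A.gequiv.symm a g).2

lemma proj_of_mem {g : G} {a : R} (h : a ∈ A.C g) : A.proj g a = a := by
  have : A.gequiv.symm a = DirectSum.of _ g ⟨a, h⟩ := by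
    apply A.gequiv.injective; simp
  rw [proj_apply, this, DirectSum.of_eq_same]

lemma proj_of_mem_ne {g h : G} {a : R} (ha : a ∈ A.C h) (hne : g ≠ h) : A.proj g a = 0 := by
  have : A.gequiv.symm a = DirectSum.of _ h ⟨a, ha⟩ := by
    apply A.gequiv.injective; simp
  rw [proj_apply, this, DirectSum.of_eq_of_ne _ _ _ hne]; rfl

lemma indep {g h : G} {a : R} (hg : a ∈ A.C g) (hh : a ∈ A.C h) (hne : g ≠ h) : a = 0 := by
  have := A.proj_of_mem hg
  rw [A.proj_of_mem_ne hh hne] at this; exact this.symm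

lemma mem_iSup_top (a : R) : a ∈ ⨆ g, A.C g := by
  obtain ⟨x, rfl⟩ := A.isInternal.surjective a
  induction x using DirectSum.induction_on with
  | zero => rw [map_zero]; exact zero_mem _
  | of g c => exact AddSubgroup.mem_iSup_of_mem g (by simpa using c.2)
  | add x y hx hy => rw [map_add]; exact add_mem hx hy

lemma proj_mem_of_iSup_inf {D : AddSubgroup R} {a : R} (g : G)
    (ha : a ∈ ⨆ h, (A.C h ⊓ D)) : A.proj g a ∈ D := by
  refine AddSubgroup.iSup_induction (C := fun x => (A.proj g x : R) ∈ D) _ ha ?_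
    (show (A.proj g) 0 ∈ D by rw [map_zero]; exact D.zero_mem) ?_
  · rintro h x ⟨hx1, hx2⟩
    by_cases hgh : g = h
    · subst hgh; rw [A.proj_of_mem hx1]; exact hx2
    · rw [A.proj_of_mem_ne hx1 hgh]; exact D.zero_mem
  · intro x y hx hy; rw [map_add]; exact D.add_mem hx hy

/-- A homogeneous idempotent in the graded Jacobson radical is zero. -/
lemma idem_jacobson_eq_zero {f : R} (hfJ : f ∈ A.gradedJacobson)
    (hf1 : f ∈ A.C 1) (hfe : f * f = f) : f = 0 := by
  by_contra hf0
  -- the homogeneous right ideal (1 - f) R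
  classical
  let Kset : Set R := Set.range (fun x : R => x - f * x)
  have Kadd : ∀ {x y}, x ∈ Kset → y ∈ Kset → x + y ∈ Kset := by
    rintro _ _ ⟨x, rfl⟩ ⟨y, rfl⟩
    exact ⟨x + y, by simp [mul_add]; abel⟩
  let K : AddSubgroup R :=
    { carrier := Kset
      zero_mem' := ⟨0, by simp⟩
      add_mem' := Kadd
      neg_mem' := by
        rintro _ ⟨x, rfl⟩
        exact ⟨-x, show -x - f * -x = -(x - f*x) by rw [mul_neg]; abel⟩ }
  have KmulR : ∀ a ∈ K, ∀ r : R, a * r ∈ K := by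
    rintro _ ⟨x, rfl⟩ r
    exact ⟨x * r, by simp [sub_mul, mul_assoc]⟩
  have Khom : ∀ a ∈ K, a ∈ ⨆ g : G, (A.C g ⊓ K) := by
    rintro _ ⟨x, rfl⟩
    have hx := A.mem_iSup_top x
    refine AddSubgroup.iSup_induction (C := fun x => x - f * x ∈ ⨆ g : G, (A.C g ⊓ K)) _ hx ?_ ?_ ?_
    · intro g c hc
      refine AddSubgroup.mem_iSup_of_mem g ⟨?_, ⟨c, rfl⟩⟩
      exact (A.C g).sub_mem hc (by simpa using A.mul_mem hf1 hc)
    · simpa using zero_mem _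
    · intro u v hu hv
      have : (u + v) - f * (u + v) = (u - f * u) + (v - f * v) := by
        rw [mul_add]; abel
      rw [this]; exact add_mem hu hv
  have hfK : f ∉ Kset := by
    rintro ⟨x, hx⟩
    have hx' : x - f * x = f := hx
    apply hf0
    have h1 : f * x - f * (f * x) = f := by rw [← mul_sub, hx', hfe]
    have h2 : f * (f * x) = f * x := by rw [← mul_assoc, hfe]
    rw [h2, sub_self] at h1
    exact h1.symm
  -- Zorn
  let T : Set (Set R) := {s | ∃ M : HomRightIdeal A, M.carrier = s ∧ (1:R) ∉ s ∧ Kset ⊆ s}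
  have h1K : (1:R) ∉ Kset := by
    rintro ⟨x, hx⟩
    have hx' : x - f * x = 1 := hx
    apply hfK
    refine ⟨f * x, ?_⟩
    show f * x - f * (f * x) = f
    rw [← mul_sub, hx', mul_one]
  have hKT : Kset ∈ T := ⟨⟨K, KmulR, Khom⟩, rfl, h1K, le_refl _⟩
  have hchains : ∀ c ⊆ T, IsChain (· ⊆ ·) c → c.Nonempty →
      ∃ ub ∈ T, ∀ s ∈ c, s ⊆ ub := by
    intro c hcT hchain hcne
    refine ⟨⋃₀ c, ?_, fun s hs => Set.subset_sUnion_of_mem hs⟩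
    obtain ⟨s₀, hs₀⟩ := hcne
    obtain ⟨M₀, hM₀, h1₀, hK₀⟩ := hcT hs₀
    have hsub : ∀ s ∈ c, ∃ M : HomRightIdeal A, (M.carrier : Set R) = s := by
      intro s hs; obtain ⟨M, hM, -, -⟩ := hcT hs; exact ⟨M, hM⟩
    let U : AddSubgroup R :=
      { carrier := ⋃₀ c
        zero_mem' := ⟨s₀, hs₀, by
          obtain ⟨M, hM⟩ := hsub s₀ hs₀; rw [← hM]; exact zero_mem _⟩
        add_mem' := by
          rintro x y ⟨s, hs, hxs⟩ ⟨s', hs', hys'⟩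
          rcases hchain.total hs hs' with h | h
          · obtain ⟨M, hM⟩ := hsub s' hs'
            subst hM
            exact ⟨_, hs', SetLike.mem_coe.2 (add_mem
              (SetLike.mem_coe.1 (h hxs)) (SetLike.mem_coe.1 hys'))⟩
          · obtain ⟨M, hM⟩ := hsub s hs
            subst hM
            exact ⟨_, hs, SetLike.mem_coe.2 (add_mem
              (SetLike.mem_coe.1 hxs) (SetLike.mem_coe.1 (h hys')))⟩
        neg_mem' := by
          rintro x ⟨s, hs, hxs⟩
          obtain ⟨M, hM⟩ := hsub s hs
          subst hM
          exact ⟨_, hs, SetLike.mem_coe.2 (neg_mem (SetLike.mem_coe.1 hxs))⟩ }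
    refine ⟨⟨U, ?_, ?_⟩, rfl, ?_, ?_⟩
    · rintro a ⟨s, hs, has⟩ r
      obtain ⟨M, hM⟩ := hsub s hs
      subst hM
      exact ⟨_, hs, SetLike.mem_coe.2 (M.mul_mem_right a (SetLike.mem_coe.1 has) r)⟩
    · rintro a ⟨s, hs, has⟩
      obtain ⟨M, hM⟩ := hsub s hs
      have hmem : a ∈ ⨆ g : G, (A.C g ⊓ M.carrier) := M.homogeneous a (by
        rw [← hM] at has; exact has)
      refine AddSubgroup.iSup_induction
        (C := fun x => x ∈ ⨆ g : G, (A.C g ⊓ U)) _ hmem ?_ ?_ ?_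
      · rintro g x ⟨hx1, hx2⟩
        exact AddSubgroup.mem_iSup_of_mem g ⟨hx1, ⟨s, hs, by rw [← hM]; exact hx2⟩⟩
      · exact zero_mem _
      · intro x y hx hy; exact add_mem hx hy
    · rintro ⟨s, hs, h1s⟩
      obtain ⟨M, hM, h1, -⟩ := hcT hs
      exact h1 h1s
    · exact fun x hx => ⟨s₀, hs₀, hK₀ hx⟩
  obtain ⟨m, hKsubm, hmax⟩ := zorn_subset_nonempty T hchains Kset hKT
  obtain ⟨M, hMm, h1m, hKm⟩ := hmax.prop
  have hMmax : M.IsMaximal := by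
      constructor
      · intro h
        apply h1m; rw [← hMm, h]; trivial
      · intro N hN hMN
        have h1N : (1:R) ∉ N.carrier := by
          intro h1
          apply hN
          ext r; simp only [AddSubgroup.mem_top, iff_true]
          simpa using N.mul_mem_right 1 h1 r
        have : (N.carrier : Set R) ∈ T :=
          ⟨N, rfl, h1N, fun x hx => hMN (show x ∈ (M.carrier : Set R) from hMm.symm ▸ hKm hx)⟩
        have hsm : (N.carrier : Set R) ⊆ m := hmax.2 this (by rw [← hMm]; exact hMN)
        have : (N.carrier : Set R) = M.carrier :=
          Set.Subset.antisymm (by rw [hMm]; exact hsm) hMN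
        exact SetLike.coe_injective this
  have hfM : f ∈ M.carrier := hfJ M hMmax
  have h1fM : (1:R) - f * 1 ∈ (M.carrier : Set R) := hMm.symm ▸ hKm ⟨1, rfl⟩
  rw [mul_one] at h1fM
  apply h1m
  have h1' : (1:R) ∈ (M.carrier : Set R) := by simpa using M.carrier.add_mem hfM h1fM
  exact hMm ▸ h1'


lemma mk'_eq_zero (J : TwoSidedIdeal R) (x : R) : J.ringCon.mk' x = 0 ↔ x ∈ J := by
  rw [show (0 : J.ringCon.Quotient) = J.ringCon.mk' 0 from (map_zero _).symm]
  rw [show J.ringCon.mk' x = (x : J.ringCon.Quotient) from rfl]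
  rw [show J.ringCon.mk' 0 = ((0:R) : J.ringCon.Quotient) from rfl]
  rw [RingCon.eq, J.rel_iff]; simp

lemma proj_mem_J {J : TwoSidedIdeal R} (hJ : ∀ x : R, x ∈ J ↔ x ∈ A.gradedJacobson)
    {w : R} (hw : w ∈ J) (g : G) : A.proj g w ∈ J := by
  rw [hJ] at hw ⊢
  intro I hI
  exact A.proj_mem_of_iSup_inf g (I.homogeneous w (hw I hI))

lemma pow_mem {g : G} {a : R} (h : a ∈ A.C g) : ∀ n : ℕ, a^(n+1) ∈ A.C (g^(n+1))
  | 0 => by simpa using h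
  | n+1 => by
    rw [pow_succ a (n+1), pow_succ g (n+1)]
    exact A.mul_mem (pow_mem h n) h

lemma idem_deg_one {f : R} {h : G} (hfC : f ∈ A.C h) (hfe : f * f = f) (hf0 : f ≠ 0) :
    h = 1 := by
  by_cases hq : h * h = h
  · exact mul_left_cancel (a := h) (show h * h = h * 1 by rw [mul_one]; exact hq)
  · exact absurd (A.indep (hfe ▸ A.mul_mem hfC hfC) hfC hq) hf0

lemma nil_of_quot_nil {J : TwoSidedIdeal R} (hJ : ∀ x : R, x ∈ J ↔ x ∈ A.gradedJacobson)
    (hnil : ∀ a ∈ A.gradedJacobson, A.Homogeneous a → IsNilpotent a)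
    {g : G} {x : R} (hx : x ∈ A.C g) (h : IsNilpotent (J.ringCon.mk' x)) :
    IsNilpotent x := by
  obtain ⟨n, hn⟩ := h
  have hn' : J.ringCon.mk' (x^(n+1)) = 0 := by
    rw [map_pow, pow_succ, hn, zero_mul]
  have hxJ : x^(n+1) ∈ J := (mk'_eq_zero J _).1 hn'
  obtain ⟨m, hm⟩ := hnil _ ((hJ _).1 hxJ) ⟨g^(n+1), A.pow_mem hx n⟩
  exact ⟨(n+1)*m, by rw [pow_mul, hm]⟩

end Grading

section Lift
open Polynomial
variable {R : Type*} [Ring R]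
-- key polynomial identity
lemma poly_key (k : ℕ) :
    let P : ℤ[X] := X + (X^2 - X) * (1 - 2*X)
    (P^2 - P)^(k+1) =
      (X^2 - X)^(k+2) * ((X^2 - X)^k * ((1 - 2*X)^2 - 4)^(k+1)) := by
  intro P
  have base : P^2 - P = (X^2 - X)^2 * ((1 - 2*X)^2 - 4) := by
    show ((X + (X^2 - X) * (1 - 2*X) : ℤ[X]))^2 - _ = _; ring
  rw [base, mul_pow, ← pow_mul, show 2*(k+1) = (k+2)+k by ring, pow_add, mul_assoc]

lemma lift_nilpotent_idem (J : TwoSidedIdeal R) (D : AddSubgroup R)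
    (hone : (1:R) ∈ D) (hmul : ∀ {a b : R}, a ∈ D → b ∈ D → a * b ∈ D) :
    ∀ (n : ℕ) (x : R), x ∈ D → x*x - x ∈ J → (x*x - x)^n = 0 →
      ∃ e : R, e ∈ D ∧ IsIdempotentElem e ∧ e - x ∈ J := by
  intro n
  induction n with
  | zero =>
    intro x hxD _ hn
    have h10 : (1:R) = 0 := by simpa using hn
    refine ⟨x, hxD, ?_, by simpa using J.zero_mem⟩
    · show x * x = x
      calc x*x = x*x*1 := by rw [mul_one]
        _ = 0 := by rw [h10, mul_zero]
        _ = x*1 := by rw [h10, mul_zero]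
        _ = x := mul_one x
  | succ m ih =>
    match m with
    | 0 =>
      intro x hxD hxJ hn
      have : x*x - x = 0 := by simpa using hn
      exact ⟨x, hxD, show x*x = x from by rwa [sub_eq_zero] at this,
        by simpa using J.zero_mem⟩
    | k+1 =>
      intro x hxD hxJ hn
      set t := x*x - x with ht
      set u := (1:R) - 2*x with hu
      set y := x + t*u with hy
      have hyD : y ∈ D := by
        refine D.add_mem hxD (hmul (D.sub_mem (hmul hxD hxD) hxD) ?_)
        exact D.sub_mem hone (by simpa [two_mul] using D.add_mem hxD hxD)
      have hyxJ : y - x ∈ J := by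
        simpa [hy] using J.mul_mem_right _ _ hxJ
      have hyJ : y*y - y ∈ J := by
        have hid : y*y - y = ((y-x)*y + x*(y-x) - (y-x)) + (x*x - x) := by
          noncomm_ring
        rw [hid]
        exact J.add_mem (J.sub_mem (J.add_mem (J.mul_mem_right _ _ hyxJ)
          (J.mul_mem_left _ _ hyxJ)) hyxJ) hxJ
      have hyn : (y*y - y)^(k+1) = 0 := by
        have hmap := congrArg (Polynomial.aeval x) (poly_key k)
        simp only [map_pow, map_mul, map_sub, map_add, map_one, map_ofNat, Polynomial.aeval_X,
          Polynomial.aeval_X] at hmap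
        have hx2 : (Polynomial.aeval x) ((X:ℤ[X])^2) = x*x := by
          simp [sq]
        have hy' : y = x + (x*x - x) * (1 - 2*x) := rfl
        calc (y*y - y)^(k+1)
            = ((x + (x*x-x)*(1-2*x)) * (x + (x*x-x)*(1-2*x)) - (x + (x*x-x)*(1-2*x)))^(k+1) := by
              rw [← hy']
          _ = (x*x - x)^(k+2) * ((x*x - x)^k * ((1-2*x)*(1-2*x) - 4)^(k+1)) := by
              simpa [sq, mul_comm] using hmap
          _ = 0 := by rw [show (x*x - x)^(k+2) = 0 from hn, zero_mul]
      obtain ⟨e, heD, he2, heyJ⟩ := ih y hyD hyJ hyn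
      exact ⟨e, heD, he2, by simpa using J.add_mem heyJ hyxJ⟩

end Lift

/-- For `G` finite, a `G`-graded ring `R` is graded nil clean iff `J^g(R)` is
graded-nil and `R/J^g(R)` is graded nil clean.  Here `J` is the graded Jacobson
radical realized as a two-sided ideal. -/
theorem stmt6 {G : Type*} [Group G] [DecidableEq G] [Finite G] {R : Type*} [Ring R]
    (A : Grading G R) (J : TwoSidedIdeal R)
    (hJ : ∀ x : R, x ∈ J ↔ x ∈ A.gradedJacobson) :
    A.GradedNilClean ↔
      ((∀ a ∈ A.gradedJacobson, A.Homogeneous a → IsNilpotent a) ∧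
        A.QuotGradedNilClean J) := by
  constructor
  · intro hGNC
    constructor
    · rintro a haJ ⟨g, hg⟩
      obtain ⟨f, b, ⟨hdeg, hfC⟩, hfe, ⟨k, hbC⟩, hbn, hab⟩ := hGNC a ⟨g, hg⟩
      by_cases hf0 : f = 0
      · subst hf0; rw [zero_add] at hab; exact hab ▸ hbn
      · have hd1 : hdeg = 1 := A.idem_deg_one hfC hfe hf0
        subst hd1
        by_cases hg1 : g = 1
        · subst hg1
          -- show f is an idempotent in the graded Jacobson radical, contradiction
          exfalso
          apply hf0
          by_cases hk1 : k = 1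
          · subst hk1
            -- quotient argument: mk f = - mk b is nilpotent and idempotent
            have haJ' : a ∈ J := (hJ a).2 haJ
            have hma : J.ringCon.mk' a = 0 := (Grading.mk'_eq_zero J a).2 haJ'
            obtain ⟨n, hbn'⟩ := hbn
            have hfb : J.ringCon.mk' f = - J.ringCon.mk' b := by
              have h1 := congrArg (J.ringCon.mk') hab
              rw [hma, map_add] at h1
              exact eq_neg_of_add_eq_zero_left h1.symm
            have hfnil : IsNilpotent (J.ringCon.mk' f) := by
              rw [hfb]
              exact IsNilpotent.neg ⟨n, by rw [← map_pow, hbn', map_zero]⟩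
            obtain ⟨m, hm⟩ := hfnil
            have hfidem : J.ringCon.mk' f * J.ringCon.mk' f = J.ringCon.mk' f := by
              rw [← map_mul, hfe]
            have hfm : J.ringCon.mk' f = 0 := by
              have := IsIdempotentElem.pow_succ_eq m hfidem
              rw [pow_succ, hm, zero_mul] at this
              exact this.symm
            have hfJg : f ∈ A.gradedJacobson := (hJ f).1 ((Grading.mk'_eq_zero J f).1 hfm)
            exact A.idem_jacobson_eq_zero hfJg hfC hfe
          · -- k ≠ 1 : then b = 0 and a = f
            have hb0 : b = 0 := by
              have h1 := congrArg (A.proj k) hab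
              rw [A.proj_of_mem_ne hg hk1, map_add, A.proj_of_mem_ne hfC hk1,
                A.proj_of_mem hbC, zero_add] at h1
              exact h1.symm
            subst hb0
            rw [add_zero] at hab
            subst hab
            exact A.idem_jacobson_eq_zero haJ hfC hfe
        · -- g ≠ 1
          by_cases hk1 : k = 1
          · subst hk1
            have ha1 : a ∈ A.C 1 := hab ▸ add_mem hfC hbC
            rw [A.indep hg ha1 hg1]
            exact IsNilpotent.zero
          · exfalso
            apply hf0
            have h1 := congrArg (A.proj 1) hab
            rw [A.proj_of_mem_ne hg (fun e => hg1 e.symm), map_add, A.proj_of_mem hfC,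
              A.proj_of_mem_ne hbC (fun e => hk1 e.symm), add_zero] at h1
            exact h1.symm
    · rintro z ⟨g, hzm⟩
      obtain ⟨a, haC, rfl⟩ := AddSubgroup.mem_map.1 hzm
      obtain ⟨f, b, ⟨h, hfC⟩, hfe, ⟨k, hbC⟩, hbn, hab⟩ := hGNC a ⟨g, haC⟩
      refine ⟨J.ringCon.mk' f, J.ringCon.mk' b,
        ⟨h, AddSubgroup.mem_map.2 ⟨f, hfC, rfl⟩⟩,
        (by rw [IsIdempotentElem, ← map_mul, hfe]),
        ⟨k, AddSubgroup.mem_map.2 ⟨b, hbC, rfl⟩⟩,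
        hbn.map _, ?_⟩
      show (J.ringCon.mk' : R →+* J.ringCon.Quotient).toAddMonoidHom a = _
      rw [← map_add]
      exact congrArg _ hab
  · rintro ⟨hnil, hq⟩ a ⟨g, hg⟩
    have hz : A.QuotHomogeneous J (J.ringCon.mk' a) :=
      ⟨g, AddSubgroup.mem_map.2 ⟨a, hg, rfl⟩⟩
    obtain ⟨F, B, ⟨h, hF⟩, hFe, ⟨k, hB⟩, hBn, hzFB⟩ := hq _ hz
    obtain ⟨f₀, hf₀C, hf₀⟩ := AddSubgroup.mem_map.1 hF
    obtain ⟨b₀, hb₀C, hb₀⟩ := AddSubgroup.mem_map.1 hB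
    have hf₀' : J.ringCon.mk' f₀ = F := hf₀
    have hb₀' : J.ringCon.mk' b₀ = B := hb₀
    have hanil : a ∈ J → A.IsGradedNilClean a := by
      intro haJ
      have : IsNilpotent a := hnil a ((hJ a).1 haJ) ⟨g, hg⟩
      exact ⟨0, a, ⟨1, zero_mem _⟩, (by rw [IsIdempotentElem, mul_zero]), ⟨g, hg⟩, this,
        (zero_add a).symm⟩
    by_cases hF0 : F = 0
    · -- mk a = B is nilpotent, hence a is nilpotent
      have hBnil : IsNilpotent (J.ringCon.mk' a) := by rw [hzFB, hF0, zero_add]; exact hBn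
      have hna : IsNilpotent a := A.nil_of_quot_nil hJ hnil hg hBnil
      exact ⟨0, a, ⟨1, zero_mem _⟩, (by rw [IsIdempotentElem, mul_zero]), ⟨g, hg⟩, hna,
        (zero_add a).symm⟩
    · -- F ≠ 0; F is idempotent of degree h, so h = 1
      have htJ : f₀ * f₀ - f₀ ∈ J := by
        apply (Grading.mk'_eq_zero J _).1
        rw [map_sub, map_mul, hf₀', hFe, sub_self]
      have hh1 : h = 1 := by
        by_contra hne
        have hsq : h * h ≠ h := fun e =>
          hne (mul_left_cancel (a := h) (show h * h = h * 1 by rw [mul_one]; exact e))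
        have hp := A.proj_mem_J hJ htJ h
        rw [map_sub, A.proj_of_mem_ne (A.mul_mem hf₀C hf₀C) (fun e => hsq e.symm),
          A.proj_of_mem hf₀C, zero_sub] at hp
        have hf₀J : f₀ ∈ J := by simpa using J.neg_mem hp
        exact hF0 (by rw [← hf₀']; exact (Grading.mk'_eq_zero J f₀).2 hf₀J)
      subst hh1
      by_cases hg1 : g = 1
      · subst hg1
        -- lift the idempotent
        have htC : f₀ * f₀ - f₀ ∈ A.C 1 := by
          refine sub_mem ?_ hf₀C
          simpa using A.mul_mem hf₀C hf₀C
        obtain ⟨n, hn⟩ := hnil _ ((hJ _).1 htJ) ⟨1, htC⟩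
        obtain ⟨e, heC, hee, heJ⟩ := lift_nilpotent_idem J (A.C 1) A.one_mem
          (fun ha hb => by simpa using A.mul_mem ha hb) n f₀ hf₀C htJ hn
        have hmke : J.ringCon.mk' e = F := by
          have h0 : J.ringCon.mk' (e - f₀) = 0 := (Grading.mk'_eq_zero J _).2 heJ
          rw [map_sub, sub_eq_zero] at h0
          rw [h0, hf₀']
        have hmb : J.ringCon.mk' (a - e) = B := by
          rw [map_sub, hmke, hzFB, add_sub_cancel_left]
        have hbnil : IsNilpotent (a - e) :=
          A.nil_of_quot_nil hJ hnil (sub_mem hg heC) (by rw [hmb]; exact hBn)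
        exact ⟨e, a - e, ⟨1, heC⟩, hee, ⟨1, sub_mem hg heC⟩, hbnil,
          (add_sub_cancel e a ▸ by abel)⟩
      · -- g ≠ 1
        have hwJ : f₀ + b₀ - a ∈ J := by
          apply (Grading.mk'_eq_zero J _).1
          rw [map_sub, map_add, hf₀', hb₀', ← hzFB, sub_self]
        by_cases hk1 : k = 1
        · -- the degree-g component of f₀ + b₀ - a is -a
          have hp := A.proj_mem_J hJ hwJ g
          rw [map_sub, map_add, A.proj_of_mem_ne hf₀C hg1,
            A.proj_of_mem_ne (show b₀ ∈ A.C 1 from hk1 ▸ hb₀C) hg1,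
            A.proj_of_mem hg, add_zero, zero_sub] at hp
          have haJ : a ∈ J := by simpa using J.neg_mem hp
          have : IsNilpotent a := hnil a ((hJ a).1 haJ) ⟨g, hg⟩
          exact ⟨0, a, ⟨1, zero_mem _⟩, (by rw [IsIdempotentElem, mul_zero]), ⟨g, hg⟩, this,
            (zero_add a).symm⟩
        · -- the degree-1 component of f₀ + b₀ - a is f₀, so F = 0, contradiction
          exfalso
          have hp := A.proj_mem_J hJ hwJ 1
          rw [map_sub, map_add, A.proj_of_mem hf₀C,
            A.proj_of_mem_ne hb₀C (fun e => hk1 e.symm),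
            A.proj_of_mem_ne hg (fun e => hg1 e.symm), add_zero, sub_zero] at hp
          exact hF0 (by rw [← hf₀']; exact (Grading.mk'_eq_zero J f₀).2 hp)
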